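/- Let G be a group with no non-trivial abelian normal subgroups, and let A, B be normal subgroups of G. Then C_A(C_G(B)) = C_A(C_A(B)). -/
import Mathlib

lemma centralizer_normal_aux {G : Type*} [Group G] (N : Subgroup G) (hN : N.Normal) :
    (Subgroup.centralizer (N : Set G)).Normal := by
  constructor
  intro x hx g
  rw [Subgroup.mem_centralizer_iff] at hx ⊢
  intro h hh
  have h1 : g⁻¹ * h * g ∈ N := by simpa using hN.conj_mem h hh g⁻¹
  have := hx _ h1
  calc h * (g * x * g⁻¹) = g * (g⁻¹ * h * g) * x * g⁻¹ := by group
    _ = g * x * (g⁻¹ * h * g) * g⁻¹ := by rw [mul_assoc g, this, ← mul_assoc]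
    _ = g * x * g⁻¹ * h := by group

/-- If every normal subgroup of `G` has trivial centre, then for normal subgroups `A`, `B`:
`C_A(C_G(B)) = C_A(C_A(B))`, where `C_A(X) = A ⊓ C_G(X)`. -/
theorem stmt_4 {G : Type*} [Group G]
    (hG : ∀ N : Subgroup G, N.Normal → N ⊓ Subgroup.centralizer (N : Set G) = ⊥)
    (A B : Subgroup G) (hA : A.Normal) (hB : B.Normal) :
    A ⊓ Subgroup.centralizer ((Subgroup.centralizer (B : Set G)) : Set G) =
      A ⊓ Subgroup.centralizer ((A ⊓ Subgroup.centralizer (B : Set G) : Subgroup G) : Set G) := by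
  set N : Subgroup G := A ⊓ Subgroup.centralizer (B : Set G) with hNdef
  have hCB : (Subgroup.centralizer (B : Set G)).Normal := centralizer_normal_aux B hB
  have hN : N.Normal := ⟨fun n hn g => ⟨hA.conj_mem n hn.1 g, hCB.conj_mem n hn.2 g⟩⟩
  have hCN : (Subgroup.centralizer (N : Set G)).Normal := centralizer_normal_aux N hN
  apply le_antisymm
  · exact inf_le_inf_left A (Subgroup.centralizer_le (by exact_mod_cast inf_le_right))
  · rintro x ⟨hxA, hxCN⟩
    refine ⟨hxA, Subgroup.mem_centralizer_iff.mpr fun c hc => ?_⟩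
    -- show c * x = x * c for c ∈ C_G(B)
    set y := x⁻¹ * c⁻¹ * x * c with hy
    have hyA : y ∈ A := by
      have h1 : c⁻¹ * x * c ∈ A := by simpa using hA.conj_mem x hxA c⁻¹
      have : x⁻¹ * (c⁻¹ * x * c) ∈ A := A.mul_mem (A.inv_mem hxA) h1
      simpa [hy, mul_assoc] using this
    have hyCB : y ∈ Subgroup.centralizer (B : Set G) := by
      have h1 : x⁻¹ * c⁻¹ * x ∈ Subgroup.centralizer (B : Set G) := by
        simpa [mul_assoc] using hCB.conj_mem c⁻¹ (Subgroup.inv_mem _ hc) x⁻¹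
      exact Subgroup.mul_mem _ h1 hc
    have hyCN : y ∈ Subgroup.centralizer (N : Set G) := by
      have h1 : c⁻¹ * x * c ∈ Subgroup.centralizer (N : Set G) := by
        simpa using hCN.conj_mem x hxCN c⁻¹
      have : x⁻¹ * (c⁻¹ * x * c) ∈ Subgroup.centralizer (N : Set G) :=
        Subgroup.mul_mem _ (Subgroup.inv_mem _ hxCN) h1
      simpa [hy, mul_assoc] using this
    have hy1 : y = 1 := by
      have : y ∈ N ⊓ Subgroup.centralizer (N : Set G) := ⟨⟨hyA, hyCB⟩, hyCN⟩
      rw [hG N hN] at this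
      simpa using this
    have h2 : x⁻¹ * (c⁻¹ * x * c) = 1 := by
      have : x⁻¹ * c⁻¹ * x * c = 1 := hy1
      rw [← this]; group
    have h3 : c⁻¹ * x * c = x := (inv_mul_eq_one.mp h2).symm
    exact ((by group : x * c = c * (c⁻¹ * x * c)).trans (congrArg (c * ·) h3)).symm
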